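/- Let κ > 0, and consider the polynomials in ρ given by P(ρ) = (κ̃−4)ρ − ρ²κ̃/κ + 12 − 2κ and Q(ρ) = (κ−4)ρκ̃/κ − ρ²κ̃/κ + 12 − 2κ̃, where κ̃ > 0. The resultant of P and Q (as polynomials in ρ) equals 12κ̃(κ̃−κ)²(κκ̃−16)/κ³. -/
import Mathlib


/-- The resultant of two quadratic polynomials `a ρ² + b ρ + c` and `a' ρ² + b' ρ + c'`
is `(a c' − a' c)² − (a b' − a' b)(b c' − b' c)`. -/
noncomputable def resultantQuad (a b c a' b' c' : ℝ) : ℝ :=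
  (a * c' - a' * c) ^ 2 - (a * b' - a' * b) * (b * c' - b' * c)

/-- The resultant of the two commutation-condition polynomials
`P(ρ) = (κ̃−4)ρ − ρ²κ̃/κ + 12 − 2κ` and `Q(ρ) = (κ−4)ρκ̃/κ − ρ²κ̃/κ + 12 − 2κ̃`
equals `12κ̃(κ̃−κ)²(κκ̃−16)/κ³`. -/
theorem resultant_commutation_polys (κ κt : ℝ) (hκ : 0 < κ) (hκt : 0 < κt) :
    resultantQuad (-(κt / κ)) (κt - 4) (12 - 2 * κ)
        (-(κt / κ)) ((κ - 4) * κt / κ) (12 - 2 * κt) =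
      12 * κt * (κt - κ) ^ 2 * (κ * κt - 16) / κ ^ 3 := by
  have h := hκ.ne'
  unfold resultantQuad
  field_simp
  ring
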